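/- Define, for complex x with Re x > 0, G̃(x) = exp( ∫_0^∞ f_G(s;x) ds ) with f_G(s;x) = (1/s) [ (1/2)(1−x)(2−x) e^{−s} + (1−x) e^{−s}/(1 − e^{−s}) − (e^{−xs} − e^{−s})/(1 − e^{−s})² ]. Then G̃(1) = 1 and G̃ satisfies the Barnes functional equation G̃(x+1) = Γ(x) · G̃(x) for every complex x with Re x > 0, where Γ is the complex gamma function. -/

import Mathlib

open Complex MeasureTheory

/-- The integrand `f_G(s; x) = (1/s)[ (1/2)(1−x)(2−x) e^{−s} + (1−x) e^{−s}/(1 − e^{−s})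
  − (e^{−xs} − e^{−s})/(1 − e^{−s})² ]`. -/
noncomputable def fG (x : ℂ) (s : ℝ) : ℂ :=
  (1 / (s : ℂ)) *
    ((1 / 2) * (1 - x) * (2 - x) * Complex.exp (-(s : ℂ)) +
      (1 - x) * Complex.exp (-(s : ℂ)) / (1 - Complex.exp (-(s : ℂ))) -
      (Complex.exp (-x * (s : ℂ)) - Complex.exp (-(s : ℂ))) / (1 - Complex.exp (-(s : ℂ))) ^ 2)

/-- `G̃(x) = exp(∫_0^∞ f_G(s; x) ds)`. -/
noncomputable def Gtilde (x : ℂ) : ℂ := Complex.exp (∫ s in Set.Ioi (0 : ℝ), fG x s)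

open Set Filter Finset
open scoped Topology

namespace GtildeAux

lemma cexp_neg_ofReal (t : ℝ) : Complex.exp (-(t:ℂ)) = ((Real.exp (-t) : ℝ) : ℂ) := by
  norm_cast

lemma one_sub_cexp_ne (t : ℝ) (ht : 0 < t) : (1 : ℂ) - Complex.exp (-(t:ℂ)) ≠ 0 := by
  rw [cexp_neg_ofReal, sub_ne_zero]
  intro h
  have : Real.exp (-t) = 1 := by exact_mod_cast h.symm
  have : -t = 0 := by
    have := Real.exp_eq_exp (x := -t) (y := 0)
    simp [Real.exp_zero] at this
    simpa [Real.exp_zero] using Real.exp_eq_exp (x := -t) (y := 0) |>.mp (by simpa [Real.exp_zero] using ‹Real.exp (-t) = 1›)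
  linarith

lemma norm_one_sub_cexp (t : ℝ) (ht : 0 ≤ t) :
    ‖(1 : ℂ) - Complex.exp (-(t:ℂ))‖ = 1 - Real.exp (-t) := by
  rw [cexp_neg_ofReal, ← Complex.ofReal_one, ← Complex.ofReal_sub, Complex.norm_real]
  rw [Real.norm_eq_abs, _root_.abs_of_nonneg]
  have := Real.exp_le_one_iff.mpr (neg_nonpos.mpr ht)
  linarith

lemma one_sub_exp_lower {t : ℝ} (ht : 0 < t) (ht1 : t ≤ 1) : t / 2 ≤ 1 - Real.exp (-t) := by
  have h1 : Real.exp (-t) ≤ 1 / (1 + t) := by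
    have h0 : (0:ℝ) < 1 + t := by linarith
    have he : 1 + t ≤ Real.exp t := by linarith [Real.add_one_le_exp t]
    rw [Real.exp_neg, one_div]
    exact inv_anti₀ h0 he
  have h2 : 1 / (1 + t) ≤ 1 - t / 2 := by
    rw [div_le_iff₀ (by positivity)]
    nlinarith
  linarith

lemma one_sub_exp_half {t : ℝ} (ht : 1 ≤ t) : 1 / 2 ≤ 1 - Real.exp (-t) := by
  have : Real.exp (-t) ≤ Real.exp (-1) := Real.exp_le_exp.mpr (by linarith)
  have h := Real.exp_one_gt_d9
  have : Real.exp (-1) ≤ 1/2 := by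
    rw [Real.exp_neg]
    rw [inv_le_comm₀ (Real.exp_pos 1) (by norm_num)]
    nlinarith
  linarith

lemma norm_cexp_neg_mul (w : ℂ) (t : ℝ) : ‖Complex.exp (-w * t)‖ = Real.exp (-(w.re * t)) := by
  rw [Complex.norm_exp]
  congr 1
  simp [Complex.mul_re]

/-- Taylor remainder of `exp (lam * t)` of order `n`. -/
noncomputable def Rn (n : ℕ) (lam : ℂ) (t : ℝ) : ℂ :=
  Complex.exp (lam * t) - ∑ m ∈ Finset.range n, (lam * t) ^ m / m.factorial

lemma norm_Rn_le (n : ℕ) (hn : 0 < n) (lam : ℂ) (t : ℝ) (h : ‖lam‖ * |t| ≤ 1) :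
    ‖Rn n lam t‖ ≤ 2 * ‖lam‖ ^ n * |t| ^ n := by
  have habs : ‖lam * t‖ = ‖lam‖ * |t| := by
    rw [norm_mul, Complex.norm_real, Real.norm_eq_abs]
  have h1 := Complex.exp_bound (x := lam * t) (by rw [habs]; exact h) hn
  have h2 : ((n.succ : ℝ) * ((n.factorial * n : ℕ) : ℝ)⁻¹) ≤ 2 := by
    rw [mul_inv_le_iff₀ (by positivity)]
    push_cast
    have h3 : (n : ℝ) ≤ (n.factorial : ℝ) * n := by
      nlinarith [Nat.one_le_cast (α := ℝ) |>.mpr n.factorial_pos, Nat.cast_pos (α := ℝ) |>.mpr hn]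
    have hn1 : (1:ℝ) ≤ (n:ℝ) := by exact_mod_cast hn
    push_cast at h3 ⊢
    linarith
  calc ‖Rn n lam t‖ ≤ ‖lam * t‖ ^ n * ((n.succ : ℝ) * ((n.factorial * n : ℕ): ℝ)⁻¹) := by
        rw [Rn]; exact_mod_cast h1
    _ ≤ (‖lam‖ * |t|) ^ n * 2 := by
        rw [habs]
        apply mul_le_mul_of_nonneg_left h2 (by positivity)
    _ = 2 * ‖lam‖ ^ n * |t| ^ n := by ring

lemma R1_eq (lam : ℂ) (t : ℝ) : Rn 1 lam t = Complex.exp (lam * t) - 1 := by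
  simp [Rn]

lemma R2_eq (lam : ℂ) (t : ℝ) : Rn 2 lam t = Complex.exp (lam * t) - (1 + lam * t) := by
  rw [Rn, Finset.sum_range_succ, Finset.sum_range_one]
  norm_num

lemma R3_eq (lam : ℂ) (t : ℝ) :
    Rn 3 lam t = Complex.exp (lam * t) - (1 + lam * t + (lam * t) ^ 2 / 2) := by
  rw [Rn, Finset.sum_range_succ, Finset.sum_range_succ, Finset.sum_range_one]
  norm_num [Nat.factorial]
  try ring


/-! ### Definitions of auxiliary integrands -/

noncomputable def gI (x : ℂ) (t : ℝ) : ℂ :=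
  (1 / (t:ℂ)) * ((x - 1) * Complex.exp (-(t:ℂ)) +
    (Complex.exp (-x * t) - Complex.exp (-(t:ℂ))) / (1 - Complex.exp (-(t:ℂ))))

noncomputable def hI (x : ℂ) (t : ℝ) : ℂ :=
  (1 / (t:ℂ)) * (-x + Complex.exp (-(t:ℂ)) * (1 - Complex.exp (-x * t))
      / (1 - Complex.exp (-(t:ℂ))))

noncomputable def hE (x : ℂ) (t : ℝ) : ℂ := Complex.exp (-(t:ℂ)) * hI x t

noncomputable def frI (w : ℂ) (t : ℝ) : ℂ :=
  (Complex.exp (-(t:ℂ)) - Complex.exp (-w * t)) / t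

lemma norm_cexp_neg (t : ℝ) : ‖Complex.exp (-(t:ℂ))‖ = Real.exp (-t) := by
  rw [cexp_neg_ofReal, Complex.norm_real, Real.norm_eq_abs, _root_.abs_of_nonneg (Real.exp_pos _).le]

lemma ofReal_ne (t : ℝ) (ht : 0 < t) : (t : ℂ) ≠ 0 := by
  exact_mod_cast ht.ne'

/-! ### Continuity -/

lemma continuous_w : Continuous fun t : ℝ => Complex.exp (-(t:ℂ)) := by
  fun_prop

lemma continuous_v (x : ℂ) : Continuous fun t : ℝ => Complex.exp (-x * t) := by
  fun_prop

lemma contOn_gI (x : ℂ) : ContinuousOn (gI x) (Ioi 0) := by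
  apply ContinuousOn.mul
  · exact continuousOn_const.div (Complex.continuous_ofReal.continuousOn)
      (fun t ht => ofReal_ne t ht)
  · apply ContinuousOn.add
    · exact (continuous_const.mul continuous_w).continuousOn
    · exact ((continuous_v x).sub continuous_w).continuousOn.div
        (continuous_const.sub continuous_w).continuousOn
        (fun t ht => one_sub_cexp_ne t ht)

lemma contOn_hI (x : ℂ) : ContinuousOn (hI x) (Ioi 0) := by
  apply ContinuousOn.mul
  · exact continuousOn_const.div (Complex.continuous_ofReal.continuousOn)
      (fun t ht => ofReal_ne t ht)
  · apply ContinuousOn.add continuousOn_const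
    · exact (continuous_w.mul (continuous_const.sub (continuous_v x))).continuousOn.div
        (continuous_const.sub continuous_w).continuousOn
        (fun t ht => one_sub_cexp_ne t ht)

lemma contOn_hE (x : ℂ) : ContinuousOn (hE x) (Ioi 0) :=
  continuous_w.continuousOn.mul (contOn_hI x)

lemma contOn_frI (w : ℂ) : ContinuousOn (frI w) (Ioi 0) := by
  exact (continuous_w.sub (continuous_v w)).continuousOn.div
    (Complex.continuous_ofReal.continuousOn) (fun t ht => ofReal_ne t ht)

lemma contOn_fG (x : ℂ) : ContinuousOn (fG x) (Ioi 0) := by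
  apply ContinuousOn.mul
  · exact continuousOn_const.div (Complex.continuous_ofReal.continuousOn)
      (fun t ht => ofReal_ne t ht)
  · apply ContinuousOn.sub
    · apply ContinuousOn.add
      · exact (continuous_const.mul continuous_w).continuousOn
      · exact (continuous_const.mul continuous_w).continuousOn.div
          (continuous_const.sub continuous_w).continuousOn
          (fun t ht => one_sub_cexp_ne t ht)
    · exact ((continuous_v x).sub continuous_w).continuousOn.div
        ((continuous_const.sub continuous_w).pow 2).continuousOn
        (fun t ht => pow_ne_zero 2 (one_sub_cexp_ne t ht))

/-! ### Generic integrability -/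

lemma bound_on_Ioc_one {F : ℝ → ℂ} (hc : ContinuousOn F (Ioi 0)) {C δ : ℝ} (hδ : 0 < δ)
    (hδ1 : δ ≤ 1) (hb : ∀ t : ℝ, 0 < t → t ≤ δ → ‖F t‖ ≤ C) :
    ∃ C', ∀ t ∈ Ioc (0:ℝ) 1, ‖F t‖ ≤ C' := by
  obtain ⟨C₂, hC₂⟩ := (isCompact_Icc (a := δ) (b := 1)).exists_bound_of_continuousOn
    (hc.mono (fun t ht => lt_of_lt_of_le hδ ht.1))
  refine ⟨max C C₂, fun t ht => ?_⟩
  rcases le_or_gt t δ with h | h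
  · exact le_trans (hb t ht.1 h) (le_max_left _ _)
  · exact le_trans (hC₂ t ⟨h.le, ht.2⟩) (le_max_right _ _)

lemma integrableOn_of_bounds {F : ℝ → ℂ} (hc : ContinuousOn F (Ioi 0)) {C₁ C₂ ρ : ℝ}
    (hρ : 0 < ρ)
    (h1 : ∀ t ∈ Ioc (0:ℝ) 1, ‖F t‖ ≤ C₁)
    (h2 : ∀ t : ℝ, 1 ≤ t → ‖F t‖ ≤ C₂ * Real.exp (-ρ * t)) :
    IntegrableOn F (Ioi 0) := by
  have hIoc : IntegrableOn F (Ioc 0 1) := by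
    apply Integrable.mono' (g := fun _ => C₁)
      (integrableOn_const (C := C₁) (s := Ioc (0:ℝ) 1) (μ := volume) measure_Ioc_lt_top.ne)
    · exact (hc.mono Ioc_subset_Ioi_self).aestronglyMeasurable measurableSet_Ioc
    · exact (ae_restrict_iff' measurableSet_Ioc).mpr (Filter.Eventually.of_forall h1)
  have hIoi : IntegrableOn F (Ioi 1) := by
    apply Integrable.mono' ((exp_neg_integrableOn_Ioi 1 hρ).const_mul C₂)
    · exact (hc.mono (Ioi_subset_Ioi zero_le_one)).aestronglyMeasurable measurableSet_Ioi
    · exact (ae_restrict_iff' measurableSet_Ioi).mpr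
        (Filter.Eventually.of_forall (fun t ht => h2 t (le_of_lt ht)))
  have := hIoc.union hIoi
  rwa [Ioc_union_Ioi_eq_Ioi zero_le_one] at this


/-! ### Exponential rewrites -/

lemma cexp_neg1 (t : ℝ) : Complex.exp ((-1:ℂ) * t) = Complex.exp (-(t:ℂ)) := by norm_num

lemma cexp_neg2 (t : ℝ) : Complex.exp ((-2:ℂ) * t) = Complex.exp (-(t:ℂ)) ^ 2 := by
  rw [show ((-2:ℂ)) * t = (2:ℕ) * (-(t:ℂ)) by push_cast; ring, Complex.exp_nat_mul]

lemma cexp_neg3 (t : ℝ) : Complex.exp ((-3:ℂ) * t) = Complex.exp (-(t:ℂ)) ^ 3 := by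
  rw [show ((-3:ℂ)) * t = (3:ℕ) * (-(t:ℂ)) by push_cast; ring, Complex.exp_nat_mul]

/-! ### Rewriting the integrands as single fractions -/

lemma gI_eq (x : ℂ) {t : ℝ} (ht : 0 < t) :
    gI x t = ((x - 1) * Complex.exp (-(t:ℂ)) * (1 - Complex.exp (-(t:ℂ)))
      + Complex.exp (-x * t) - Complex.exp (-(t:ℂ))) /
      ((t:ℂ) * (1 - Complex.exp (-(t:ℂ)))) := by
  rw [gI]
  field_simp [ofReal_ne t ht, one_sub_cexp_ne t ht]
  ring

lemma hI_eq (x : ℂ) {t : ℝ} (ht : 0 < t) :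
    hI x t = (-x + (x + 1) * Complex.exp (-(t:ℂ)) - Complex.exp (-(x+1) * t)) /
      ((t:ℂ) * (1 - Complex.exp (-(t:ℂ)))) := by
  have hsplit : Complex.exp (-(x+1) * t) = Complex.exp (-x * t) * Complex.exp (-(t:ℂ)) := by
    rw [← Complex.exp_add]; congr 1; ring
  rw [hI, hsplit]
  field_simp [ofReal_ne t ht, one_sub_cexp_ne t ht]
  ring

lemma fG_eq (x : ℂ) {t : ℝ} (ht : 0 < t) :
    fG x t = ((1/2) * (1-x) * (2-x) * Complex.exp (-(t:ℂ)) * (1 - Complex.exp (-(t:ℂ))) ^ 2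
      + (1-x) * Complex.exp (-(t:ℂ)) * (1 - Complex.exp (-(t:ℂ)))
      - (Complex.exp (-x * t) - Complex.exp (-(t:ℂ)))) /
      ((t:ℂ) * (1 - Complex.exp (-(t:ℂ))) ^ 2) := by
  rw [fG]
  field_simp [ofReal_ne t ht, one_sub_cexp_ne t ht]

/-! ### Numerator identities in terms of Taylor remainders -/

lemma M_gI_eq (x : ℂ) (t : ℝ) :
    (x - 1) * Complex.exp (-(t:ℂ)) * (1 - Complex.exp (-(t:ℂ)))
      + Complex.exp (-x * t) - Complex.exp (-(t:ℂ))
    = (x - 2) * Rn 2 (-1) t + (1 - x) * Rn 2 (-2) t + Rn 2 (-x) t := by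
  rw [R2_eq, R2_eq, R2_eq, cexp_neg1, cexp_neg2]
  ring

lemma K_hI_eq (x : ℂ) (t : ℝ) :
    -x + (x + 1) * Complex.exp (-(t:ℂ)) - Complex.exp (-(x+1) * t)
    = (x + 1) * Rn 2 (-1) t - Rn 2 (-(x+1)) t := by
  rw [R2_eq, R2_eq, cexp_neg1]
  ring

lemma N_fG_eq (x : ℂ) (t : ℝ) :
    (1/2) * (1-x) * (2-x) * Complex.exp (-(t:ℂ)) * (1 - Complex.exp (-(t:ℂ))) ^ 2
      + (1-x) * Complex.exp (-(t:ℂ)) * (1 - Complex.exp (-(t:ℂ)))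
      - (Complex.exp (-x * t) - Complex.exp (-(t:ℂ)))
    = ((1/2) * (1-x) * (2-x) + (1-x) + 1) * Rn 3 (-1) t
      + (-(1-x) * (2-x) - (1-x)) * Rn 3 (-2) t
      + ((1/2) * (1-x) * (2-x)) * Rn 3 (-3) t - Rn 3 (-x) t := by
  rw [R3_eq, R3_eq, R3_eq, R3_eq, cexp_neg1, cexp_neg2, cexp_neg3]
  ring

lemma Fr_eq (w : ℂ) (t : ℝ) :
    Complex.exp (-(t:ℂ)) - Complex.exp (-w * t) = Rn 1 (-1) t - Rn 1 (-w) t := by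
  rw [R1_eq, R1_eq, cexp_neg1]
  ring


/-! ### Near-zero bounds -/

lemma gI_bound_near0 (x : ℂ) :
    ∃ C δ : ℝ, 0 < δ ∧ δ ≤ 1 ∧ ∀ t : ℝ, 0 < t → t ≤ δ → ‖gI x t‖ ≤ C := by
  refine ⟨2 * (2 * ‖x - 2‖ + 8 * ‖(1:ℂ) - x‖ + 2 * ‖x‖ ^ 2), min 1 (1 / (2 + ‖x‖)),
    lt_min one_pos (by positivity), min_le_left _ _, fun t ht htδ => ?_⟩
  have hx0 : (0:ℝ) ≤ ‖x‖ := norm_nonneg x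
  have habs : |t| = t := abs_of_pos ht
  have ht1 : t ≤ 1 := le_trans htδ (min_le_left _ _)
  have ht2 : t * (2 + ‖x‖) ≤ 1 := by
    have h := le_trans htδ (min_le_right _ _)
    rw [le_div_iff₀ (by positivity)] at h
    exact h
  have b1 : ‖Rn 2 (-1) t‖ ≤ 2 * t ^ 2 := by
    have := norm_Rn_le 2 (by norm_num) (-1) t (by simp [habs]; linarith)
    simpa [habs] using this
  have b2 : ‖Rn 2 (-2) t‖ ≤ 8 * t ^ 2 := by
    have n2 : ‖(-2:ℂ)‖ = 2 := by norm_num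
    have := norm_Rn_le 2 (by norm_num) (-2) t (by rw [habs, n2]; nlinarith)
    rw [habs, n2] at this
    nlinarith [this]
  have b3 : ‖Rn 2 (-x) t‖ ≤ 2 * ‖x‖ ^ 2 * t ^ 2 := by
    have nx : ‖-x‖ = ‖x‖ := norm_neg x
    have := norm_Rn_le 2 (by norm_num) (-x) t (by rw [habs, nx]; nlinarith)
    rw [habs, nx] at this
    exact this
  have hnum : ‖(x - 1) * Complex.exp (-(t:ℂ)) * (1 - Complex.exp (-(t:ℂ)))
      + Complex.exp (-x * t) - Complex.exp (-(t:ℂ))‖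
      ≤ (2 * ‖x - 2‖ + 8 * ‖(1:ℂ) - x‖ + 2 * ‖x‖ ^ 2) * t ^ 2 := by
    rw [M_gI_eq]
    have t1 := norm_add_le ((x - 2) * Rn 2 (-1) t + (1 - x) * Rn 2 (-2) t) (Rn 2 (-x) t)
    have t2 := norm_add_le ((x - 2) * Rn 2 (-1) t) ((1 - x) * Rn 2 (-2) t)
    simp only [norm_mul] at t2
    have m1 := mul_le_mul_of_nonneg_left b1 (norm_nonneg (x - 2))
    have m2 := mul_le_mul_of_nonneg_left b2 (norm_nonneg ((1:ℂ) - x))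
    linarith
  rw [gI_eq x ht, norm_div]
  have hden : t * (t / 2) ≤ ‖(t:ℂ) * (1 - Complex.exp (-(t:ℂ)))‖ := by
    rw [norm_mul, Complex.norm_real, Real.norm_eq_abs, habs, norm_one_sub_cexp t ht.le]
    have := one_sub_exp_lower ht ht1
    gcongr
  calc ‖(x - 1) * Complex.exp (-(t:ℂ)) * (1 - Complex.exp (-(t:ℂ)))
      + Complex.exp (-x * t) - Complex.exp (-(t:ℂ))‖ / ‖(t:ℂ) * (1 - Complex.exp (-(t:ℂ)))‖
      ≤ ((2 * ‖x - 2‖ + 8 * ‖(1:ℂ) - x‖ + 2 * ‖x‖ ^ 2) * t ^ 2) / (t * (t / 2)) :=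
        div_le_div₀ (by positivity) hnum (by positivity) hden
    _ = 2 * (2 * ‖x - 2‖ + 8 * ‖(1:ℂ) - x‖ + 2 * ‖x‖ ^ 2) := by
        field_simp

lemma hE_bound_near0 (x : ℂ) :
    ∃ C δ : ℝ, 0 < δ ∧ δ ≤ 1 ∧ ∀ t : ℝ, 0 < t → t ≤ δ → ‖hE x t‖ ≤ C := by
  refine ⟨2 * (2 * ‖x + 1‖ + 2 * ‖x + 1‖ ^ 2), min 1 (1 / (1 + ‖x + 1‖)),
    lt_min one_pos (by positivity), min_le_left _ _, fun t ht htδ => ?_⟩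
  have hx0 : (0:ℝ) ≤ ‖x + 1‖ := norm_nonneg _
  have habs : |t| = t := abs_of_pos ht
  have ht1 : t ≤ 1 := le_trans htδ (min_le_left _ _)
  have ht2 : t * (1 + ‖x + 1‖) ≤ 1 := by
    have h := le_trans htδ (min_le_right _ _)
    rw [le_div_iff₀ (by positivity)] at h
    exact h
  have b1 : ‖Rn 2 (-1) t‖ ≤ 2 * t ^ 2 := by
    have := norm_Rn_le 2 (by norm_num) (-1) t (by simp [habs]; linarith)
    simpa [habs] using this
  have b2 : ‖Rn 2 (-(x+1)) t‖ ≤ 2 * ‖x + 1‖ ^ 2 * t ^ 2 := by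
    have nx : ‖-(x+1)‖ = ‖x + 1‖ := norm_neg _
    have := norm_Rn_le 2 (by norm_num) (-(x+1)) t (by rw [habs, nx]; nlinarith)
    rw [habs, nx] at this
    exact this
  have hnum : ‖-x + (x + 1) * Complex.exp (-(t:ℂ)) - Complex.exp (-(x+1) * t)‖
      ≤ (2 * ‖x + 1‖ + 2 * ‖x + 1‖ ^ 2) * t ^ 2 := by
    rw [K_hI_eq]
    have t1 := norm_sub_le ((x + 1) * Rn 2 (-1) t) (Rn 2 (-(x+1)) t)
    rw [norm_mul] at t1
    have m1 := mul_le_mul_of_nonneg_left b1 (norm_nonneg (x + 1))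
    linarith
  have hden : t * (t / 2) ≤ ‖(t:ℂ) * (1 - Complex.exp (-(t:ℂ)))‖ := by
    rw [norm_mul, Complex.norm_real, Real.norm_eq_abs, habs, norm_one_sub_cexp t ht.le]
    have := one_sub_exp_lower ht ht1
    gcongr
  have hw : ‖Complex.exp (-(t:ℂ))‖ ≤ 1 := by
    rw [norm_cexp_neg]
    exact Real.exp_le_one_iff.mpr (by linarith)
  rw [hE, norm_mul, hI_eq x ht, norm_div]
  calc ‖Complex.exp (-(t:ℂ))‖ * (‖-x + (x + 1) * Complex.exp (-(t:ℂ))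
        - Complex.exp (-(x+1) * t)‖ / ‖(t:ℂ) * (1 - Complex.exp (-(t:ℂ)))‖)
      ≤ 1 * (((2 * ‖x + 1‖ + 2 * ‖x + 1‖ ^ 2) * t ^ 2) / (t * (t / 2))) := by
        apply mul_le_mul hw (div_le_div₀ (by positivity) hnum (by positivity) hden)
          (by positivity) one_pos.le
    _ = 2 * (2 * ‖x + 1‖ + 2 * ‖x + 1‖ ^ 2) := by
        rw [one_mul]
        field_simp

lemma fG_bound_near0 (x : ℂ) :
    ∃ C δ : ℝ, 0 < δ ∧ δ ≤ 1 ∧ ∀ t : ℝ, 0 < t → t ≤ δ → ‖fG x t‖ ≤ C := by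
  set c1 : ℂ := (1/2) * (1-x) * (2-x) + (1-x) + 1 with hc1
  set c2 : ℂ := -(1-x) * (2-x) - (1-x) with hc2
  set c3 : ℂ := (1/2) * (1-x) * (2-x) with hc3
  refine ⟨4 * (2 * ‖c1‖ + 16 * ‖c2‖ + 54 * ‖c3‖ + 2 * ‖x‖ ^ 3), min 1 (1 / (3 + ‖x‖)),
    lt_min one_pos (by positivity), min_le_left _ _, fun t ht htδ => ?_⟩
  have hx0 : (0:ℝ) ≤ ‖x‖ := norm_nonneg x
  have habs : |t| = t := abs_of_pos ht
  have ht1 : t ≤ 1 := le_trans htδ (min_le_left _ _)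
  have ht2 : t * (3 + ‖x‖) ≤ 1 := by
    have h := le_trans htδ (min_le_right _ _)
    rw [le_div_iff₀ (by positivity)] at h
    exact h
  have b1 : ‖Rn 3 (-1) t‖ ≤ 2 * t ^ 3 := by
    have := norm_Rn_le 3 (by norm_num) (-1) t (by simp [habs]; linarith)
    simpa [habs] using this
  have b2 : ‖Rn 3 (-2) t‖ ≤ 16 * t ^ 3 := by
    have n2 : ‖(-2:ℂ)‖ = 2 := by norm_num
    have := norm_Rn_le 3 (by norm_num) (-2) t (by rw [habs, n2]; nlinarith)
    rw [habs, n2] at this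
    nlinarith [this]
  have b3 : ‖Rn 3 (-3) t‖ ≤ 54 * t ^ 3 := by
    have n3 : ‖(-3:ℂ)‖ = 3 := by norm_num
    have := norm_Rn_le 3 (by norm_num) (-3) t (by rw [habs, n3]; nlinarith)
    rw [habs, n3] at this
    nlinarith [this]
  have b4 : ‖Rn 3 (-x) t‖ ≤ 2 * ‖x‖ ^ 3 * t ^ 3 := by
    have nx : ‖-x‖ = ‖x‖ := norm_neg x
    have := norm_Rn_le 3 (by norm_num) (-x) t (by rw [habs, nx]; nlinarith)
    rw [habs, nx] at this
    exact this
  have hnum : ‖(1/2) * (1-x) * (2-x) * Complex.exp (-(t:ℂ)) * (1 - Complex.exp (-(t:ℂ))) ^ 2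
      + (1-x) * Complex.exp (-(t:ℂ)) * (1 - Complex.exp (-(t:ℂ)))
      - (Complex.exp (-x * t) - Complex.exp (-(t:ℂ)))‖
      ≤ (2 * ‖c1‖ + 16 * ‖c2‖ + 54 * ‖c3‖ + 2 * ‖x‖ ^ 3) * t ^ 3 := by
    have hid := N_fG_eq x t
    rw [← hc1, ← hc2, ← hc3] at hid
    rw [hid]
    have t1 := norm_sub_le (c1 * Rn 3 (-1) t + c2 * Rn 3 (-2) t + c3 * Rn 3 (-3) t) (Rn 3 (-x) t)
    have t2 := norm_add_le (c1 * Rn 3 (-1) t + c2 * Rn 3 (-2) t) (c3 * Rn 3 (-3) t)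
    have t3 := norm_add_le (c1 * Rn 3 (-1) t) (c2 * Rn 3 (-2) t)
    simp only [norm_mul] at t2 t3
    have m1 := mul_le_mul_of_nonneg_left b1 (norm_nonneg c1)
    have m2 := mul_le_mul_of_nonneg_left b2 (norm_nonneg c2)
    have m3 := mul_le_mul_of_nonneg_left b3 (norm_nonneg c3)
    linarith
  have hden : t * ((t / 2) * (t / 2)) ≤ ‖(t:ℂ) * (1 - Complex.exp (-(t:ℂ))) ^ 2‖ := by
    rw [norm_mul, norm_pow, Complex.norm_real, Real.norm_eq_abs, habs,
      norm_one_sub_cexp t ht.le]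
    have h := one_sub_exp_lower ht ht1
    have h2 : (t / 2) * (t / 2) ≤ (1 - Real.exp (-t)) ^ 2 := by nlinarith
    nlinarith
  rw [fG_eq x ht, norm_div]
  calc ‖(1/2) * (1-x) * (2-x) * Complex.exp (-(t:ℂ)) * (1 - Complex.exp (-(t:ℂ))) ^ 2
      + (1-x) * Complex.exp (-(t:ℂ)) * (1 - Complex.exp (-(t:ℂ)))
      - (Complex.exp (-x * t) - Complex.exp (-(t:ℂ)))‖ /
      ‖(t:ℂ) * (1 - Complex.exp (-(t:ℂ))) ^ 2‖
      ≤ ((2 * ‖c1‖ + 16 * ‖c2‖ + 54 * ‖c3‖ + 2 * ‖x‖ ^ 3) * t ^ 3) / (t * ((t / 2) * (t / 2))) :=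
        div_le_div₀ (by positivity) hnum (by positivity) hden
    _ = 4 * (2 * ‖c1‖ + 16 * ‖c2‖ + 54 * ‖c3‖ + 2 * ‖x‖ ^ 3) := by
        field_simp
        ring

lemma frI_bound_near0 (w : ℂ) :
    ∃ C δ : ℝ, 0 < δ ∧ δ ≤ 1 ∧ ∀ t : ℝ, 0 < t → t ≤ δ → ‖frI w t‖ ≤ C := by
  refine ⟨2 + 2 * ‖w‖, min 1 (1 / (1 + ‖w‖)),
    lt_min one_pos (by positivity), min_le_left _ _, fun t ht htδ => ?_⟩
  have hx0 : (0:ℝ) ≤ ‖w‖ := norm_nonneg w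
  have habs : |t| = t := abs_of_pos ht
  have ht1 : t ≤ 1 := le_trans htδ (min_le_left _ _)
  have ht2 : t * (1 + ‖w‖) ≤ 1 := by
    have h := le_trans htδ (min_le_right _ _)
    rw [le_div_iff₀ (by positivity)] at h
    exact h
  have b1 : ‖Rn 1 (-1) t‖ ≤ 2 * t := by
    have := norm_Rn_le 1 (by norm_num) (-1) t (by simp [habs]; linarith)
    simpa [habs] using this
  have b2 : ‖Rn 1 (-w) t‖ ≤ 2 * ‖w‖ * t := by
    have nx : ‖-w‖ = ‖w‖ := norm_neg w
    have := norm_Rn_le 1 (by norm_num) (-w) t (by rw [habs, nx]; nlinarith)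
    rw [habs, nx] at this
    simpa using this
  have hnum : ‖Complex.exp (-(t:ℂ)) - Complex.exp (-w * t)‖ ≤ (2 + 2 * ‖w‖) * t := by
    rw [Fr_eq]
    have t1 := norm_sub_le (Rn 1 (-1) t) (Rn 1 (-w) t)
    linarith
  rw [frI, norm_div, Complex.norm_real, Real.norm_eq_abs, habs]
  calc ‖Complex.exp (-(t:ℂ)) - Complex.exp (-w * t)‖ / t ≤ ((2 + 2 * ‖w‖) * t) / t :=
        div_le_div₀ (by positivity) hnum ht le_rfl
    _ = 2 + 2 * ‖w‖ := by field_simp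


/-! ### Tail bounds and integrability -/

lemma gI_tail (x : ℂ) (hx : 0 < x.re) (t : ℝ) (ht : 1 ≤ t) :
    ‖gI x t‖ ≤ (‖x - 1‖ + 4) * Real.exp (-(min x.re 1) * t) := by
  have ht0 : (0:ℝ) < t := lt_of_lt_of_le one_pos ht
  set ρ := min x.re 1 with hρ
  set E := Real.exp (-ρ * t) with hEdef
  have hE0 : 0 < E := Real.exp_pos _
  have hw : ‖Complex.exp (-(t:ℂ))‖ ≤ E := by
    rw [norm_cexp_neg, hEdef]
    apply Real.exp_le_exp.mpr
    have : ρ ≤ 1 := min_le_right _ _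
    nlinarith
  have hv : ‖Complex.exp (-x * t)‖ ≤ E := by
    rw [norm_cexp_neg_mul, hEdef]
    apply Real.exp_le_exp.mpr
    have : ρ ≤ x.re := min_le_left _ _
    nlinarith
  have h1w : (1:ℝ)/2 ≤ ‖1 - Complex.exp (-(t:ℂ))‖ := by
    rw [norm_one_sub_cexp t ht0.le]
    exact one_sub_exp_half ht
  have h1t : ‖1/(t:ℂ)‖ ≤ 1 := by
    rw [norm_div, norm_one, Complex.norm_real, Real.norm_eq_abs, abs_of_pos ht0, div_le_one ht0]
    exact ht
  rw [gI, norm_mul]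
  have hinner : ‖(x - 1) * Complex.exp (-(t:ℂ)) +
      (Complex.exp (-x * t) - Complex.exp (-(t:ℂ))) / (1 - Complex.exp (-(t:ℂ)))‖
      ≤ (‖x - 1‖ + 4) * E := by
    have t1 := norm_add_le ((x - 1) * Complex.exp (-(t:ℂ)))
      ((Complex.exp (-x * t) - Complex.exp (-(t:ℂ))) / (1 - Complex.exp (-(t:ℂ))))
    rw [norm_mul, norm_div] at t1
    have hm : ‖x - 1‖ * ‖Complex.exp (-(t:ℂ))‖ ≤ ‖x - 1‖ * E :=
      mul_le_mul_of_nonneg_left hw (norm_nonneg _)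
    have hs : ‖Complex.exp (-x * t) - Complex.exp (-(t:ℂ))‖ ≤ E + E := by
      have := norm_sub_le (Complex.exp (-x * t)) (Complex.exp (-(t:ℂ)))
      linarith
    have hd : ‖Complex.exp (-x * t) - Complex.exp (-(t:ℂ))‖ / ‖1 - Complex.exp (-(t:ℂ))‖
        ≤ (E + E) / (1/2) := div_le_div₀ (by positivity) hs (by norm_num) h1w
    have he : (E + E) / (1/2 : ℝ) = 4 * E := by ring
    rw [he] at hd
    linarith
  have := mul_le_mul h1t hinner (norm_nonneg _) one_pos.le
  linarith

lemma hE_tail (x : ℂ) (hx : 0 < x.re) (t : ℝ) (ht : 1 ≤ t) :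
    ‖hE x t‖ ≤ (‖x‖ + 4) * Real.exp (-(min x.re 1) * t) := by
  have ht0 : (0:ℝ) < t := lt_of_lt_of_le one_pos ht
  set ρ := min x.re 1 with hρ
  set E := Real.exp (-ρ * t) with hEdef
  have hE0 : 0 < E := Real.exp_pos _
  have hw : ‖Complex.exp (-(t:ℂ))‖ ≤ E := by
    rw [norm_cexp_neg, hEdef]
    apply Real.exp_le_exp.mpr
    have : ρ ≤ 1 := min_le_right _ _
    nlinarith
  have hw1 : ‖Complex.exp (-(t:ℂ))‖ ≤ 1 := by
    rw [norm_cexp_neg]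
    exact Real.exp_le_one_iff.mpr (by linarith)
  have hv1 : ‖Complex.exp (-x * t)‖ ≤ 1 := by
    rw [norm_cexp_neg_mul]
    apply Real.exp_le_one_iff.mpr
    nlinarith
  have h1w : (1:ℝ)/2 ≤ ‖1 - Complex.exp (-(t:ℂ))‖ := by
    rw [norm_one_sub_cexp t ht0.le]
    exact one_sub_exp_half ht
  have h1t : ‖1/(t:ℂ)‖ ≤ 1 := by
    rw [norm_div, norm_one, Complex.norm_real, Real.norm_eq_abs, abs_of_pos ht0, div_le_one ht0]
    exact ht
  have hinner : ‖-x + Complex.exp (-(t:ℂ)) * (1 - Complex.exp (-x * t))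
      / (1 - Complex.exp (-(t:ℂ)))‖ ≤ ‖x‖ + 4 := by
    have t1 := norm_add_le (-x) (Complex.exp (-(t:ℂ)) * (1 - Complex.exp (-x * t))
      / (1 - Complex.exp (-(t:ℂ))))
    rw [norm_neg, norm_div, norm_mul] at t1
    have hs : ‖(1:ℂ) - Complex.exp (-x * t)‖ ≤ 2 := by
      have := norm_sub_le (1:ℂ) (Complex.exp (-x * t))
      rw [norm_one] at this
      linarith
    have hnum : ‖Complex.exp (-(t:ℂ))‖ * ‖(1:ℂ) - Complex.exp (-x * t)‖ ≤ 2 := by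
      have := mul_le_mul hw1 hs (norm_nonneg _) one_pos.le
      linarith
    have hd : ‖Complex.exp (-(t:ℂ))‖ * ‖(1:ℂ) - Complex.exp (-x * t)‖
        / ‖1 - Complex.exp (-(t:ℂ))‖ ≤ 2 / (1/2) :=
      div_le_div₀ (by norm_num) hnum (by norm_num) h1w
    have he : (2:ℝ) / (1/2) = 4 := by norm_num
    rw [he] at hd
    linarith
  rw [hE, norm_mul, hI, norm_mul]
  have hh : ‖1/(t:ℂ)‖ * ‖-x + Complex.exp (-(t:ℂ)) * (1 - Complex.exp (-x * t))
      / (1 - Complex.exp (-(t:ℂ)))‖ ≤ ‖x‖ + 4 := by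
    have := mul_le_mul h1t hinner (norm_nonneg _) one_pos.le
    linarith
  have := mul_le_mul hw hh (by positivity) hE0.le
  nlinarith [this]

lemma fG_tail (x : ℂ) (hx : 0 < x.re) (t : ℝ) (ht : 1 ≤ t) :
    ‖fG x t‖ ≤ (‖(1:ℂ)/2 * (1 - x) * (2 - x)‖ + 2 * ‖(1:ℂ) - x‖ + 8)
      * Real.exp (-(min x.re 1) * t) := by
  have ht0 : (0:ℝ) < t := lt_of_lt_of_le one_pos ht
  set ρ := min x.re 1 with hρ
  set E := Real.exp (-ρ * t) with hEdef
  have hE0 : 0 < E := Real.exp_pos _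
  have hw : ‖Complex.exp (-(t:ℂ))‖ ≤ E := by
    rw [norm_cexp_neg, hEdef]
    apply Real.exp_le_exp.mpr
    have : ρ ≤ 1 := min_le_right _ _
    nlinarith
  have hv : ‖Complex.exp (-x * t)‖ ≤ E := by
    rw [norm_cexp_neg_mul, hEdef]
    apply Real.exp_le_exp.mpr
    have : ρ ≤ x.re := min_le_left _ _
    nlinarith
  have h1w : (1:ℝ)/2 ≤ ‖1 - Complex.exp (-(t:ℂ))‖ := by
    rw [norm_one_sub_cexp t ht0.le]
    exact one_sub_exp_half ht
  have h1t : ‖1/(t:ℂ)‖ ≤ 1 := by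
    rw [norm_div, norm_one, Complex.norm_real, Real.norm_eq_abs, abs_of_pos ht0, div_le_one ht0]
    exact ht
  rw [fG, norm_mul]
  have hinner : ‖(1:ℂ)/2 * (1 - x) * (2 - x) * Complex.exp (-(t:ℂ)) +
      (1 - x) * Complex.exp (-(t:ℂ)) / (1 - Complex.exp (-(t:ℂ))) -
      (Complex.exp (-x * t) - Complex.exp (-(t:ℂ))) / (1 - Complex.exp (-(t:ℂ))) ^ 2‖
      ≤ (‖(1:ℂ)/2 * (1 - x) * (2 - x)‖ + 2 * ‖(1:ℂ) - x‖ + 8) * E := by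
    have t1 := norm_sub_le ((1:ℂ)/2 * (1 - x) * (2 - x) * Complex.exp (-(t:ℂ)) +
      (1 - x) * Complex.exp (-(t:ℂ)) / (1 - Complex.exp (-(t:ℂ))))
      ((Complex.exp (-x * t) - Complex.exp (-(t:ℂ))) / (1 - Complex.exp (-(t:ℂ))) ^ 2)
    have t2 := norm_add_le ((1:ℂ)/2 * (1 - x) * (2 - x) * Complex.exp (-(t:ℂ)))
      ((1 - x) * Complex.exp (-(t:ℂ)) / (1 - Complex.exp (-(t:ℂ))))
    rw [norm_mul ((1:ℂ)/2 * (1 - x) * (2 - x)) (Complex.exp (-(t:ℂ))), norm_div,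
      norm_mul ((1:ℂ) - x) (Complex.exp (-(t:ℂ)))] at t2
    rw [norm_div, norm_pow] at t1
    have hA : ‖(1:ℂ)/2 * (1 - x) * (2 - x)‖ * ‖Complex.exp (-(t:ℂ))‖
        ≤ ‖(1:ℂ)/2 * (1 - x) * (2 - x)‖ * E := mul_le_mul_of_nonneg_left hw (norm_nonneg _)
    have hBnum : ‖(1:ℂ) - x‖ * ‖Complex.exp (-(t:ℂ))‖ ≤ ‖(1:ℂ) - x‖ * E :=
      mul_le_mul_of_nonneg_left hw (norm_nonneg _)
    have hB : ‖(1:ℂ) - x‖ * ‖Complex.exp (-(t:ℂ))‖ / ‖1 - Complex.exp (-(t:ℂ))‖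
        ≤ (‖(1:ℂ) - x‖ * E) / (1/2) :=
      div_le_div₀ (by positivity) hBnum (by norm_num) h1w
    have hBe : (‖(1:ℂ) - x‖ * E) / (1/2 : ℝ) = 2 * ‖(1:ℂ) - x‖ * E := by ring
    rw [hBe] at hB
    have hCnum : ‖Complex.exp (-x * t) - Complex.exp (-(t:ℂ))‖ ≤ E + E := by
      have := norm_sub_le (Complex.exp (-x * t)) (Complex.exp (-(t:ℂ)))
      linarith
    have hCden : (1:ℝ)/4 ≤ ‖1 - Complex.exp (-(t:ℂ))‖ ^ 2 := by nlinarith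
    have hC : ‖Complex.exp (-x * t) - Complex.exp (-(t:ℂ))‖ / ‖1 - Complex.exp (-(t:ℂ))‖ ^ 2
        ≤ (E + E) / (1/4) := div_le_div₀ (by positivity) hCnum (by norm_num) hCden
    have hCe : (E + E) / (1/4 : ℝ) = 8 * E := by ring
    rw [hCe] at hC
    linarith
  have := mul_le_mul h1t hinner (norm_nonneg _) one_pos.le
  linarith

lemma frI_tail (w : ℂ) (hw : 0 < w.re) (t : ℝ) (ht : 1 ≤ t) :
    ‖frI w t‖ ≤ 2 * Real.exp (-(min w.re 1) * t) := by
  have ht0 : (0:ℝ) < t := lt_of_lt_of_le one_pos ht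
  set ρ := min w.re 1 with hρ
  set E := Real.exp (-ρ * t) with hEdef
  have hE0 : 0 < E := Real.exp_pos _
  have hw1 : ‖Complex.exp (-(t:ℂ))‖ ≤ E := by
    rw [norm_cexp_neg, hEdef]
    apply Real.exp_le_exp.mpr
    have : ρ ≤ 1 := min_le_right _ _
    nlinarith
  have hv : ‖Complex.exp (-w * t)‖ ≤ E := by
    rw [norm_cexp_neg_mul, hEdef]
    apply Real.exp_le_exp.mpr
    have : ρ ≤ w.re := min_le_left _ _
    nlinarith
  rw [frI, norm_div, Complex.norm_real, Real.norm_eq_abs, abs_of_pos ht0]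
  have hnum : ‖Complex.exp (-(t:ℂ)) - Complex.exp (-w * t)‖ ≤ E + E := by
    have := norm_sub_le (Complex.exp (-(t:ℂ))) (Complex.exp (-w * t))
    linarith
  have := div_le_div₀ (by positivity) hnum ht0 le_rfl
  have h2 : (E + E) / t ≤ (E + E) / 1 :=
    div_le_div_of_nonneg_left (by positivity) one_pos ht
  have h3 : (E + E) / 1 = 2 * E := by ring
  linarith

lemma integrableOn_gI (x : ℂ) (hx : 0 < x.re) : IntegrableOn (gI x) (Ioi 0) := by
  obtain ⟨C, δ, hδ, hδ1, hb⟩ := gI_bound_near0 x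
  obtain ⟨C', hC'⟩ := bound_on_Ioc_one (contOn_gI x) hδ hδ1 hb
  exact integrableOn_of_bounds (contOn_gI x) (lt_min hx one_pos) hC' (gI_tail x hx)

lemma integrableOn_hE (x : ℂ) (hx : 0 < x.re) : IntegrableOn (hE x) (Ioi 0) := by
  obtain ⟨C, δ, hδ, hδ1, hb⟩ := hE_bound_near0 x
  obtain ⟨C', hC'⟩ := bound_on_Ioc_one (contOn_hE x) hδ hδ1 hb
  exact integrableOn_of_bounds (contOn_hE x) (lt_min hx one_pos) hC' (hE_tail x hx)

lemma integrableOn_fG (x : ℂ) (hx : 0 < x.re) : IntegrableOn (fG x) (Ioi 0) := by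
  obtain ⟨C, δ, hδ, hδ1, hb⟩ := fG_bound_near0 x
  obtain ⟨C', hC'⟩ := bound_on_Ioc_one (contOn_fG x) hδ hδ1 hb
  exact integrableOn_of_bounds (contOn_fG x) (lt_min hx one_pos) hC' (fG_tail x hx)

lemma integrableOn_frI (w : ℂ) (hw : 0 < w.re) : IntegrableOn (frI w) (Ioi 0) := by
  obtain ⟨C, δ, hδ, hδ1, hb⟩ := frI_bound_near0 w
  obtain ⟨C', hC'⟩ := bound_on_Ioc_one (contOn_frI w) hδ hδ1 hb
  exact integrableOn_of_bounds (contOn_frI w) (lt_min hw one_pos) hC' (frI_tail w hw)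


/-! ### The exponential integral and Frullani's integral -/

lemma hasDerivAt_coe (u : ℝ) : HasDerivAt (fun t : ℝ => (t:ℂ)) 1 u := by
  simpa using (hasDerivAt_id u).ofReal_comp

lemma integrableOn_cexp_negmul (w : ℂ) (hw : 0 < w.re) :
    IntegrableOn (fun t : ℝ => Complex.exp (-w * t)) (Ioi 0) := by
  apply Integrable.mono' (exp_neg_integrableOn_Ioi 0 hw)
  · exact ((continuous_v w)).continuousOn.aestronglyMeasurable measurableSet_Ioi
  · filter_upwards with t
    rw [norm_cexp_neg_mul, neg_mul]

lemma integral_cexp_negmul (w : ℂ) (hw : 0 < w.re) :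
    ∫ t in Ioi (0:ℝ), Complex.exp (-w * t) = 1 / w := by
  have hw0 : w ≠ 0 := fun h => by simp [h] at hw
  have hderiv : ∀ t ∈ Ici (0:ℝ), HasDerivAt (fun s : ℝ => -w⁻¹ * Complex.exp (-w * s))
      (Complex.exp (-w * t)) t := by
    intro t _
    have h1 : HasDerivAt (fun s : ℝ => -w * (s:ℂ)) (-w) t := by
      simpa using (hasDerivAt_coe t).const_mul (-w)
    have h2 := (h1.cexp).const_mul (-w⁻¹)
    convert h2 using 1
    · rfl
    field_simp
  have htend : Tendsto (fun t : ℝ => -w⁻¹ * Complex.exp (-w * t)) atTop (𝓝 0) := by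
    have h3 : Tendsto (fun t : ℝ => w.re * t) atTop atTop :=
      Tendsto.const_mul_atTop hw tendsto_id
    have h4 := (Real.tendsto_exp_neg_atTop_nhds_zero.comp h3).const_mul ‖w⁻¹‖
    rw [mul_zero] at h4
    refine squeeze_zero_norm (fun t => ?_) h4
    simp only [Function.comp_apply]
    rw [norm_mul, norm_neg, norm_cexp_neg_mul]
  have := integral_Ioi_of_hasDerivAt_of_tendsto' hderiv (integrableOn_cexp_negmul w hw) htend
  rw [this]
  simp [one_div]

/-- The segment integrand for Frullani's integral. -/
noncomputable def FF (z : ℂ) (u t : ℝ) : ℂ :=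
  (z - 1) * Complex.exp (-(1 + (u:ℂ) * (z - 1)) * t)

lemma FF_re_pos {z : ℂ} (hz : 0 < z.re) {u : ℝ} (hu0 : 0 ≤ u) (hu1 : u ≤ 1) :
    0 < (1 + (u:ℂ) * (z - 1)).re := by
  have : (1 + (u:ℂ) * (z - 1)).re = 1 + u * (z.re - 1) := by
    simp [Complex.add_re, Complex.mul_re, Complex.sub_re, Complex.sub_im]
  rw [this]
  rcases lt_or_ge u 1 with h | h
  · nlinarith
  · have : u = 1 := le_antisymm hu1 h
    rw [this]; simpa using hz

lemma FF_re_ge {z : ℂ} (hz : 0 < z.re) {u : ℝ} (hu0 : 0 ≤ u) (hu1 : u ≤ 1) :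
    min 1 z.re ≤ (1 + (u:ℂ) * (z - 1)).re := by
  have h : (1 + (u:ℂ) * (z - 1)).re = 1 + u * (z.re - 1) := by
    simp [Complex.add_re, Complex.mul_re, Complex.sub_re, Complex.sub_im]
  rw [h]
  have h1 : min 1 z.re ≤ 1 := min_le_left _ _
  have h2 : min 1 z.re ≤ z.re := min_le_right _ _
  nlinarith

lemma FF_inner_u {z : ℂ} {t : ℝ} (ht : 0 < t) :
    ∫ u in (0:ℝ)..1, FF z u t
      = (Complex.exp (-(t:ℂ)) - Complex.exp (-z * t)) / t := by
  have hderiv : ∀ u ∈ uIcc (0:ℝ) 1, HasDerivAt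
      (fun u : ℝ => (-(1:ℂ)/t) * Complex.exp (-(1 + (u:ℂ) * (z - 1)) * t)) (FF z u t) u := by
    intro u _
    have h1 : HasDerivAt (fun u : ℝ => -(1 + (u:ℂ) * (z - 1)) * t) (-(z-1) * t) u := by
      have h0 : HasDerivAt (fun u : ℝ => (u:ℂ) * (z - 1)) (z - 1) u := by
        simpa using (hasDerivAt_coe u).mul_const (z - 1)
      have := ((h0.const_add (1:ℂ)).neg).mul_const (t:ℂ)
      simpa using this
    have h2 := (h1.cexp).const_mul (-(1:ℂ)/t)
    convert h2 using 1
    · rfl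
    rw [FF]
    have htC : (t:ℂ) ≠ 0 := ofReal_ne t ht
    field_simp
  have hint : IntervalIntegrable (fun u : ℝ => FF z u t) volume 0 1 := by
    apply Continuous.intervalIntegrable
    unfold FF
    fun_prop
  have := intervalIntegral.integral_eq_sub_of_hasDerivAt hderiv hint
  rw [this]
  have e1 : -(1 + ((1:ℝ):ℂ) * (z - 1)) * t = -z * t := by push_cast; ring
  have e0 : -(1 + ((0:ℝ):ℂ) * (z - 1)) * t = -(t:ℂ) := by push_cast; ring
  rw [e1, e0]
  have htC : (t:ℂ) ≠ 0 := ofReal_ne t ht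
  field_simp
  ring

lemma FF_inner_t {z : ℂ} (hz : 0 < z.re) {u : ℝ} (hu0 : 0 ≤ u) (hu1 : u ≤ 1) :
    ∫ t in Ioi (0:ℝ), FF z u t = (z - 1) / (1 + (u:ℂ) * (z - 1)) := by
  unfold FF
  rw [MeasureTheory.integral_const_mul, integral_cexp_negmul _ (FF_re_pos hz hu0 hu1)]
  ring

lemma FF_integrable {z : ℂ} (hz : 0 < z.re) :
    Integrable (Function.uncurry (FF z))
      ((volume.restrict (Ioc (0:ℝ) 1)).prod (volume.restrict (Ioi (0:ℝ)))) := by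
  set ρ := min 1 z.re with hρdef
  have hρ : 0 < ρ := lt_min one_pos hz
  have hcont : Continuous (Function.uncurry (FF z)) := by
    unfold FF Function.uncurry
    fun_prop
  have hmeas := hcont.aestronglyMeasurable
    (μ := (volume.restrict (Ioc (0:ℝ) 1)).prod (volume.restrict (Ioi (0:ℝ))))
  rw [MeasureTheory.integrable_prod_iff hmeas]
  constructor
  · filter_upwards [ae_restrict_mem measurableSet_Ioc] with u hu
    simp only [Function.uncurry_apply_pair]
    unfold FF
    apply Integrable.const_mul
    apply Integrable.mono' (exp_neg_integrableOn_Ioi 0 hρ)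
    · exact (continuous_v _).continuousOn.aestronglyMeasurable measurableSet_Ioi
    · filter_upwards [ae_restrict_mem measurableSet_Ioi] with t htt
      rw [norm_cexp_neg_mul, neg_mul]
      apply Real.exp_le_exp.mpr
      have hre := FF_re_ge hz hu.1.le hu.2
      have ht0 : (0:ℝ) ≤ t := (le_of_lt htt)
      nlinarith
  · apply Integrable.mono' (g := fun _ : ℝ => ∫ t in Ioi (0:ℝ), ‖z - 1‖ * Real.exp (-ρ * t))
      (integrable_const _)
    · exact hmeas.norm.integral_prod_right'
    · filter_upwards [ae_restrict_mem measurableSet_Ioc] with u hu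
      rw [Real.norm_eq_abs, _root_.abs_of_nonneg (by positivity)]
      apply integral_mono_of_nonneg (Filter.Eventually.of_forall (fun t => norm_nonneg _))
        ((exp_neg_integrableOn_Ioi 0 hρ).const_mul ‖z - 1‖)
      filter_upwards [ae_restrict_mem measurableSet_Ioi] with t htt
      simp only [Function.uncurry_apply_pair]
      rw [FF, norm_mul, norm_cexp_neg_mul]
      apply mul_le_mul_of_nonneg_left _ (norm_nonneg _)
      apply Real.exp_le_exp.mpr
      have hre := FF_re_ge hz hu.1.le hu.2
      have ht0 : (0:ℝ) ≤ t := (le_of_lt htt)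
      nlinarith

lemma frullani {z : ℂ} (hz : 0 < z.re) :
    ∫ t in Ioi (0:ℝ), frI z t = Complex.log z := by
  have swap := MeasureTheory.integral_integral_swap
    (μ := volume.restrict (Ioc (0:ℝ) 1)) (ν := volume.restrict (Ioi (0:ℝ)))
    (f := FF z) (FF_integrable hz)
  -- swap : ∫ u, ∫ t, FF z u t = ∫ t, ∫ u, FF z u t
  have hL : ∫ t in Ioi (0:ℝ), frI z t = ∫ t in Ioi (0:ℝ), ∫ u in Ioc (0:ℝ) 1, FF z u t := by
    apply setIntegral_congr_fun measurableSet_Ioi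
    intro t ht
    show frI z t = ∫ u in Ioc (0:ℝ) 1, FF z u t
    rw [← intervalIntegral.integral_of_le zero_le_one, FF_inner_u (mem_Ioi.mp ht), frI]
  have hR : ∫ u in Ioc (0:ℝ) 1, ∫ t in Ioi (0:ℝ), FF z u t
      = ∫ u in Ioc (0:ℝ) 1, (z - 1) / (1 + (u:ℂ) * (z - 1)) := by
    apply setIntegral_congr_fun measurableSet_Ioc
    intro u hu
    show (∫ t in Ioi (0:ℝ), FF z u t) = (z - 1) / (1 + (u:ℂ) * (z - 1))
    exact FF_inner_t hz hu.1.le hu.2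
  have hFTC : ∫ u in (0:ℝ)..1, (z - 1) / (1 + (u:ℂ) * (z - 1)) = Complex.log z := by
    have hderiv : ∀ u ∈ uIcc (0:ℝ) 1, HasDerivAt
        (fun u : ℝ => Complex.log (1 + (u:ℂ) * (z - 1)))
        ((z - 1) / (1 + (u:ℂ) * (z - 1))) u := by
      intro u hu
      rw [Set.uIcc_of_le zero_le_one] at hu
      have h0 : HasDerivAt (fun u : ℝ => 1 + (u:ℂ) * (z - 1)) (z - 1) u := by
        simpa using ((hasDerivAt_coe u).mul_const (z - 1)).const_add (1:ℂ)
      exact h0.clog_real (Or.inl (FF_re_pos hz hu.1 hu.2))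
    have hint : IntervalIntegrable (fun u : ℝ => (z - 1) / (1 + (u:ℂ) * (z - 1)))
        volume 0 1 := by
      apply ContinuousOn.intervalIntegrable
      rw [Set.uIcc_of_le zero_le_one]
      apply ContinuousOn.div continuousOn_const
      · fun_prop
      · intro u hu
        intro hc
        have := FF_re_pos hz hu.1 hu.2
        rw [hc] at this
        simp at this
    have := intervalIntegral.integral_eq_sub_of_hasDerivAt hderiv hint
    rw [this]
    have e1 : 1 + ((1:ℝ):ℂ) * (z - 1) = z := by push_cast; ring
    have e0 : 1 + ((0:ℝ):ℂ) * (z - 1) = 1 := by push_cast; ring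
    rw [e1, e0, Complex.log_one, sub_zero]
  rw [hL, ← swap, hR, ← intervalIntegral.integral_of_le zero_le_one, hFTC]


/-! ### The sum identity -/

noncomputable def rI (x : ℂ) (n : ℕ) (t : ℝ) : ℂ :=
  Complex.exp (-(n:ℂ) * t) * hI x t

lemma sum_geom_Icc (w : ℂ) (hw1 : w ≠ 1) (n : ℕ) :
    ∑ k ∈ Finset.Icc 1 n, w ^ k = w * ((w ^ n - 1) / (w - 1)) := by
  have hw' : w - 1 ≠ 0 := sub_ne_zero.mpr hw1
  induction n with
  | zero => simp
  | succ n ih =>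
      rw [Finset.sum_Icc_succ_top (by omega), ih]
      field_simp
      ring

lemma key_pointwise (x : ℂ) (n : ℕ) {t : ℝ} (ht : 0 < t) :
    x * frI (n:ℂ) t + (∑ k ∈ Finset.Icc 1 n, frI (k:ℂ) t)
      - (∑ k ∈ Finset.range (n+1), frI (x + (k:ℂ)) t)
    = gI x t + rI x n t := by
  have h1w : 1 - Complex.exp (-(t:ℂ)) ≠ 0 := one_sub_cexp_ne t ht
  have hw1 : Complex.exp (-(t:ℂ)) ≠ 1 := fun h => h1w (by rw [h]; ring)
  have hw1' : Complex.exp (-(t:ℂ)) - 1 ≠ 0 := sub_ne_zero.mpr hw1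
  have htC : (t:ℂ) ≠ 0 := ofReal_ne t ht
  have ek : ∀ k : ℕ, Complex.exp (-(k:ℂ) * t) = Complex.exp (-(t:ℂ)) ^ k := fun k => by
    rw [show -(k:ℂ) * (t:ℂ) = (k:ℕ) * (-(t:ℂ)) by push_cast; ring, Complex.exp_nat_mul]
  have exk : ∀ k : ℕ, Complex.exp (-(x + (k:ℂ)) * t)
      = Complex.exp (-x * t) * Complex.exp (-(t:ℂ)) ^ k := fun k => by
    rw [show -(x + (k:ℂ)) * (t:ℂ) = -x * t + (k:ℕ) * (-(t:ℂ)) by push_cast; ring,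
      Complex.exp_add, Complex.exp_nat_mul]
  have hsum1 : ∑ k ∈ Finset.Icc 1 n, frI (k:ℂ) t
      = ((n:ℂ) * Complex.exp (-(t:ℂ))
        - Complex.exp (-(t:ℂ)) * ((Complex.exp (-(t:ℂ)) ^ n - 1) / (Complex.exp (-(t:ℂ)) - 1))) / t := by
    have hc : ∀ k ∈ Finset.Icc 1 n, frI (k:ℂ) t
        = (Complex.exp (-(t:ℂ)) - Complex.exp (-(t:ℂ)) ^ k) / t := fun k _ => by
      rw [frI, ek k]
    rw [Finset.sum_congr rfl hc, ← Finset.sum_div, Finset.sum_sub_distrib,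
      Finset.sum_const, sum_geom_Icc _ hw1 n, Nat.card_Icc]
    simp [nsmul_eq_mul]
  have hsum2 : ∑ k ∈ Finset.range (n+1), frI (x + (k:ℂ)) t
      = (((n:ℂ) + 1) * Complex.exp (-(t:ℂ))
        - Complex.exp (-x * t) * ((Complex.exp (-(t:ℂ)) ^ (n+1) - 1) / (Complex.exp (-(t:ℂ)) - 1))) / t := by
    have hc : ∀ k ∈ Finset.range (n+1), frI (x + (k:ℂ)) t
        = (Complex.exp (-(t:ℂ)) - Complex.exp (-x * t) * Complex.exp (-(t:ℂ)) ^ k) / t :=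
      fun k _ => by rw [frI, exk k]
    rw [Finset.sum_congr rfl hc, ← Finset.sum_div, Finset.sum_sub_distrib,
      Finset.sum_const, ← Finset.mul_sum, geom_sum_eq hw1]
    simp [nsmul_eq_mul]
  rw [hsum1, hsum2, frI, ek n, gI, rI, hI, ek n]
  field_simp
  ring

lemma integrableOn_rI (x : ℂ) (hx : 0 < x.re) (n : ℕ) (hn : 1 ≤ n) :
    IntegrableOn (rI x n) (Ioi 0) := by
  apply Integrable.mono' ((integrableOn_hE x hx).norm)
  · exact ((continuous_v ((n:ℂ))).continuousOn.mul (contOn_hI x)).aestronglyMeasurable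
      measurableSet_Ioi
  · filter_upwards [ae_restrict_mem measurableSet_Ioi] with t htt
    have ht0 : (0:ℝ) < t := htt
    rw [rI, norm_mul, hE, norm_mul]
    apply mul_le_mul_of_nonneg_right _ (norm_nonneg _)
    rw [norm_cexp_neg_mul, norm_cexp_neg]
    apply Real.exp_le_exp.mpr
    have : (1:ℝ) ≤ (n:ℝ) := by exact_mod_cast hn
    have hre : ((n:ℂ)).re = (n:ℝ) := by simp
    rw [hre]
    nlinarith

lemma Sln_eq (x : ℂ) (hx : 0 < x.re) (n : ℕ) (hn : 1 ≤ n) :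
    x * Complex.log (n:ℂ) + (∑ k ∈ Finset.Icc 1 n, Complex.log (k:ℂ))
      - (∑ k ∈ Finset.range (n+1), Complex.log (x + (k:ℂ)))
    = (∫ t in Ioi (0:ℝ), gI x t) + ∫ t in Ioi (0:ℝ), rI x n t := by
  have hren : (0:ℝ) < ((n:ℂ)).re := by
    simp only [Complex.natCast_re]
    exact_mod_cast lt_of_lt_of_le one_pos hn
  have hrek : ∀ k ∈ Finset.Icc 1 n, (0:ℝ) < ((k:ℂ)).re := by
    intro k hk
    simp only [Complex.natCast_re]
    exact_mod_cast lt_of_lt_of_le one_pos (Finset.mem_Icc.mp hk).1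
  have hrexk : ∀ k : ℕ, (0:ℝ) < (x + (k:ℂ)).re := by
    intro k
    simp only [Complex.add_re, Complex.natCast_re]
    have : (0:ℝ) ≤ (k:ℝ) := Nat.cast_nonneg k
    linarith
  have hint_n : IntegrableOn (frI ((n:ℂ))) (Ioi 0) := integrableOn_frI _ hren
  have hint_k : ∀ k ∈ Finset.Icc 1 n, IntegrableOn (frI ((k:ℂ))) (Ioi 0) :=
    fun k hk => integrableOn_frI _ (hrek k hk)
  have hint_xk : ∀ k ∈ Finset.range (n+1), IntegrableOn (frI (x + (k:ℂ))) (Ioi 0) :=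
    fun k _ => integrableOn_frI _ (hrexk k)
  have e1 : x * Complex.log (n:ℂ) = ∫ t in Ioi (0:ℝ), x * frI ((n:ℂ)) t := by
    rw [MeasureTheory.integral_const_mul, frullani hren]
  have e2 : (∑ k ∈ Finset.Icc 1 n, Complex.log (k:ℂ))
      = ∫ t in Ioi (0:ℝ), ∑ k ∈ Finset.Icc 1 n, frI ((k:ℂ)) t := by
    rw [MeasureTheory.integral_finset_sum _ hint_k]
    exact Finset.sum_congr rfl (fun k hk => (frullani (hrek k hk)).symm)
  have e3 : (∑ k ∈ Finset.range (n+1), Complex.log (x + (k:ℂ)))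
      = ∫ t in Ioi (0:ℝ), ∑ k ∈ Finset.range (n+1), frI (x + (k:ℂ)) t := by
    rw [MeasureTheory.integral_finset_sum _ hint_xk]
    exact Finset.sum_congr rfl (fun k _ => (frullani (hrexk k)).symm)
  have hI1 : Integrable (fun t => x * frI ((n:ℂ)) t) (volume.restrict (Ioi (0:ℝ))) :=
    hint_n.const_mul x
  have hI2 : Integrable (fun t => ∑ k ∈ Finset.Icc 1 n, frI ((k:ℂ)) t)
      (volume.restrict (Ioi (0:ℝ))) := integrable_finset_sum _ hint_k
  have hI3 : Integrable (fun t => ∑ k ∈ Finset.range (n+1), frI (x + (k:ℂ)) t)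
      (volume.restrict (Ioi (0:ℝ))) := integrable_finset_sum _ hint_xk
  have hs : ∫ t in Ioi (0:ℝ), (x * frI ((n:ℂ)) t + (∑ k ∈ Finset.Icc 1 n, frI ((k:ℂ)) t)
      - (∑ k ∈ Finset.range (n+1), frI (x + (k:ℂ)) t))
      = (∫ t in Ioi (0:ℝ), x * frI ((n:ℂ)) t)
        + (∫ t in Ioi (0:ℝ), ∑ k ∈ Finset.Icc 1 n, frI ((k:ℂ)) t)
        - ∫ t in Ioi (0:ℝ), ∑ k ∈ Finset.range (n+1), frI (x + (k:ℂ)) t := by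
    have hI12 : Integrable (fun t => x * frI ((n:ℂ)) t
        + ∑ k ∈ Finset.Icc 1 n, frI ((k:ℂ)) t) (volume.restrict (Ioi (0:ℝ))) := hI1.add hI2
    rw [MeasureTheory.integral_sub hI12 hI3, MeasureTheory.integral_add hI1 hI2]
  rw [e1, e2, e3, ← hs,
    ← MeasureTheory.integral_add (integrableOn_gI x hx) (integrableOn_rI x hx n hn)]
  apply setIntegral_congr_fun measurableSet_Ioi
  intro t ht
  exact key_pointwise x n (mem_Ioi.mp ht)

/-! ### Exponential of the sum is the Gamma sequence -/

lemma exp_Sln (x : ℂ) (hx : 0 < x.re) (n : ℕ) (hn : 1 ≤ n) :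
    Complex.exp (x * Complex.log (n:ℂ) + (∑ k ∈ Finset.Icc 1 n, Complex.log (k:ℂ))
      - (∑ k ∈ Finset.range (n+1), Complex.log (x + (k:ℂ))))
    = Complex.GammaSeq x n := by
  have hn0 : ((n:ℂ)) ≠ 0 := Nat.cast_ne_zero.mpr (by omega)
  have hxk : ∀ k : ℕ, x + (k:ℂ) ≠ 0 := by
    intro k h
    have h2 := congrArg Complex.re h
    simp only [Complex.add_re, Complex.natCast_re, Complex.zero_re] at h2
    have : (0:ℝ) ≤ (k:ℝ) := Nat.cast_nonneg k
    linarith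
  rw [Complex.exp_sub, Complex.exp_add, Complex.exp_sum, Complex.exp_sum]
  have h1 : Complex.exp (x * Complex.log (n:ℂ)) = (n:ℂ) ^ x := by
    rw [Complex.cpow_def_of_ne_zero hn0, mul_comm]
  have h2 : ∀ k ∈ Finset.Icc 1 n, Complex.exp (Complex.log (k:ℂ)) = (k:ℂ) := fun k hk =>
    Complex.exp_log (Nat.cast_ne_zero.mpr (by have := (Finset.mem_Icc.mp hk).1; omega))
  have h3 : ∀ k ∈ Finset.range (n+1), Complex.exp (Complex.log (x + (k:ℂ))) = x + (k:ℂ) :=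
    fun k _ => Complex.exp_log (hxk k)
  rw [Finset.prod_congr rfl h2, Finset.prod_congr rfl h3, h1]
  have h4 : (∏ k ∈ Finset.Icc 1 n, (k:ℂ)) = (n.factorial : ℂ) := by
    rw [← Nat.cast_prod]
    congr 1
    rw [← Finset.Ico_add_one_right_eq_Icc]
    exact Finset.prod_Ico_id_eq_factorial n
  rw [h4, Complex.GammaSeq]

/-! ### Convergence -/

lemma rI_le_hE (x : ℂ) (n : ℕ) (hn : 1 ≤ n) {t : ℝ} (ht : 0 < t) :
    ‖rI x n t‖ ≤ ‖hE x t‖ := by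
  rw [rI, norm_mul, hE, norm_mul]
  apply mul_le_mul_of_nonneg_right _ (norm_nonneg _)
  rw [norm_cexp_neg_mul, norm_cexp_neg]
  apply Real.exp_le_exp.mpr
  have h1 : (1:ℝ) ≤ (n:ℝ) := by exact_mod_cast hn
  have hre : ((n:ℂ)).re = (n:ℝ) := by simp
  rw [hre]
  nlinarith

lemma tendsto_int_rI (x : ℂ) (hx : 0 < x.re) :
    Tendsto (fun n : ℕ => ∫ t in Ioi (0:ℝ), rI x (n+1) t) atTop (𝓝 0) := by
  have h := MeasureTheory.tendsto_integral_of_dominated_convergence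
    (F := fun (n : ℕ) (t : ℝ) => rI x (n+1) t) (f := fun _ => (0:ℂ))
    (μ := volume.restrict (Ioi (0:ℝ))) (fun t => ‖hE x t‖)
    (fun n => ((continuous_v _).continuousOn.mul (contOn_hI x)).aestronglyMeasurable
      measurableSet_Ioi)
    ((integrableOn_hE x hx).norm)
    (fun n => by
      filter_upwards [ae_restrict_mem measurableSet_Ioi] with t htt
      exact rI_le_hE x (n+1) (by omega) (mem_Ioi.mp htt))
    (by
      filter_upwards [ae_restrict_mem measurableSet_Ioi] with t htt
      have ht0 : (0:ℝ) < t := mem_Ioi.mp htt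
      have hr0 : (0:ℝ) ≤ Real.exp (-t) := (Real.exp_pos _).le
      have hr1 : Real.exp (-t) < 1 := by
        rw [Real.exp_lt_one_iff]
        linarith
      have hg : Tendsto (fun n : ℕ => Real.exp (-t) ^ (n+1) * ‖hI x t‖) atTop (𝓝 0) := by
        have hp := tendsto_pow_atTop_nhds_zero_of_lt_one hr0 hr1
        have hp1 := (hp.comp (tendsto_add_atTop_nat 1)).mul_const ‖hI x t‖
        rw [zero_mul] at hp1
        exact hp1
      refine squeeze_zero_norm (fun n => ?_) hg
      rw [rI, norm_mul, norm_cexp_neg_mul]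
      apply mul_le_mul_of_nonneg_right _ (norm_nonneg _)
      have hre : ((((n+1:ℕ)):ℂ)).re = ((n+1:ℕ):ℝ) := by simp
      rw [hre, show -(((n+1:ℕ):ℝ) * t) = ((n+1:ℕ):ℝ) * (-t) by ring, Real.exp_nat_mul]
      )
  have hz : (∫ _ in Ioi (0:ℝ), (0:ℂ)) = 0 := integral_zero _ _
  rw [hz] at h
  exact h

lemma exp_integral_gI (x : ℂ) (hx : 0 < x.re) :
    Complex.exp (∫ t in Ioi (0:ℝ), gI x t) = Complex.Gamma x := by
  have h1 : Tendsto (fun n : ℕ => (∫ t in Ioi (0:ℝ), gI x t) + ∫ t in Ioi (0:ℝ), rI x (n+1) t)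
      atTop (𝓝 ((∫ t in Ioi (0:ℝ), gI x t) + 0)) :=
    tendsto_const_nhds.add (tendsto_int_rI x hx)
  rw [add_zero] at h1
  have h2 : Tendsto (fun n : ℕ => Complex.exp ((∫ t in Ioi (0:ℝ), gI x t)
      + ∫ t in Ioi (0:ℝ), rI x (n+1) t)) atTop (𝓝 (Complex.exp (∫ t in Ioi (0:ℝ), gI x t))) :=
    (Complex.continuous_exp.continuousAt.tendsto).comp h1
  have h3 : ∀ n : ℕ, Complex.exp ((∫ t in Ioi (0:ℝ), gI x t)
      + ∫ t in Ioi (0:ℝ), rI x (n+1) t) = Complex.GammaSeq x (n+1) := fun n => by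
    rw [← Sln_eq x hx (n+1) (by omega), exp_Sln x hx (n+1) (by omega)]
  have h4 : Tendsto (fun n : ℕ => Complex.GammaSeq x (n+1)) atTop (𝓝 (Complex.Gamma x)) :=
    (Complex.GammaSeq_tendsto_Gamma x).comp (tendsto_add_atTop_nat 1)
  have h5 := h2.congr (fun n => h3 n)
  exact tendsto_nhds_unique h5 h4

end GtildeAux

open GtildeAux

/-- `G̃(1) = 1` and `G̃(x+1) = Γ(x)·G̃(x)` for every complex `x` with `Re x > 0`. -/
theorem Gtilde_one_and_funEq :
    Gtilde 1 = 1 ∧ ∀ x : ℂ, 0 < x.re → Gtilde (x + 1) = Complex.Gamma x * Gtilde x := by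
  constructor
  · have h0 : ∀ s : ℝ, fG 1 s = 0 := by
      intro s
      rw [fG]
      simp
    rw [Gtilde]
    have : (∫ s in Ioi (0:ℝ), fG 1 s) = 0 := by
      simp only [h0]
      exact integral_zero _ _
    rw [this, Complex.exp_zero]
  · intro x hx
    have key : Set.EqOn (fG (x+1)) (fun t => fG x t + gI x t) (Ioi (0:ℝ)) := by
      intro t ht
      have ht0 : 0 < t := mem_Ioi.mp ht
      have h1w := one_sub_cexp_ne t ht0
      have htC := ofReal_ne t ht0
      have hsplit : Complex.exp (-(x+1) * t) = Complex.exp (-x * t) * Complex.exp (-(t:ℂ)) := by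
        rw [← Complex.exp_add]; congr 1; ring
      show fG (x+1) t = fG x t + gI x t
      have hD1 : (t:ℂ) * (1 - Complex.exp (-(t:ℂ))) ≠ 0 := mul_ne_zero htC h1w
      have hD2 : (t:ℂ) * (1 - Complex.exp (-(t:ℂ))) ^ 2 ≠ 0 :=
        mul_ne_zero htC (pow_ne_zero 2 h1w)
      rw [fG_eq (x+1) ht0, fG_eq x ht0, gI_eq x ht0, div_add_div _ _ hD2 hD1,
        div_eq_div_iff hD2 (mul_ne_zero hD2 hD1), hsplit]
      ring
    rw [Gtilde, Gtilde, setIntegral_congr_fun measurableSet_Ioi key,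
      MeasureTheory.integral_add (integrableOn_fG x hx) (integrableOn_gI x hx),
      Complex.exp_add, exp_integral_gI x hx]
    ring
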